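/- As ε → 0⁺, q(ε) = 1/2 + (1/2)·(−bd/Σ − β₀ + d′/(2d))·ε + O(ε²); that is, there exist ε₁ ∈ (0, ε₀] and C₁ > 0 such that |q(ε) − 1/2 − (1/2)(−bd/Σ − β₀ + d′/(2d))ε| ≤ C₁ε² for all ε ∈ (0, ε₁]. -/

import Mathlib

open Filter Asymptotics Set Real Topology

lemma aux_exp3 (x : ℝ) (hx : |x| ≤ 1) : |Real.exp x - (1 + x + x^2/2)| ≤ |x|^3 := by
  have h := Real.exp_bound hx (n := 3) (by norm_num)
  have hs : ∑ m ∈ Finset.range 3, x ^ m / m.factorial = 1 + x + x^2/2 := by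
    simp [Finset.sum_range_succ, Nat.factorial]
  rw [hs] at h
  norm_num [Nat.factorial, Nat.succ_eq_add_one] at h
  nlinarith [abs_nonneg x, pow_nonneg (abs_nonneg x) 3]

lemma aux_sinh3 (x : ℝ) (hx : |x| ≤ 1) : |Real.sinh x - x| ≤ |x|^3 := by
  have h1 := aux_exp3 x hx
  have h2 := aux_exp3 (-x) (by simpa using hx)
  rw [abs_neg] at h2
  have hid : Real.sinh x - x =
      ((Real.exp x - (1 + x + x^2/2)) - (Real.exp (-x) - (1 + (-x) + (-x)^2/2))) / 2 := by
    rw [Real.sinh_eq]; ring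
  rw [hid]
  calc |((Real.exp x - (1 + x + x^2/2)) - (Real.exp (-x) - (1 + (-x) + (-x)^2/2))) / 2|
      ≤ (|Real.exp x - (1 + x + x^2/2)| + |Real.exp (-x) - (1 + (-x) + (-x)^2/2)|)/2 := by
        rw [abs_div]; simp only [abs_two]; gcongr; exact abs_sub _ _
    _ ≤ (|x|^3 + |x|^3)/2 := by gcongr
    _ = |x|^3 := by ring

lemma O_congr {l : Filter ℝ} {f₁ f₂ g : ℝ → ℝ} (h : f₁ =O[l] g) (he : ∀ x, f₁ x = f₂ x) :
    f₂ =O[l] g := h.congr he (fun _ => rfl)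

lemma O_mul_one {l : Filter ℝ} {f g h : ℝ → ℝ} (hf : f =O[l] h)
    (hg : g =O[l] (fun _ => (1:ℝ))) : (fun ε => f ε * g ε) =O[l] h := by
  simpa using hf.mul hg

lemma O_one_mul {l : Filter ℝ} {f g h : ℝ → ℝ} (hg : g =O[l] (fun _ => (1:ℝ)))
    (hf : f =O[l] h) : (fun ε => g ε * f ε) =O[l] h := by
  simpa using hg.mul hf

lemma O_mul_pow {l : Filter ℝ} {f g : ℝ → ℝ} {a b : ℕ} (hf : f =O[l] (fun ε => ε^a))
    (hg : g =O[l] (fun ε => ε^b)) : (fun ε => f ε * g ε) =O[l] (fun ε => ε^(a+b)) := by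
  simpa [pow_add] using hf.mul hg


/- STATEMENT 14: With ã₊(ε) = a₊(ε)(1 − 2εβ₀) and
q(ε) = exp(−b a₋(ε)/Σ)·sinh(ã₊(ε)|b|/Σ)/sinh((ã₊(ε)+a₋(ε))|b|/Σ), as ε → 0⁺ one has
q(ε) = 1/2 + (1/2)(−bd/Σ − β₀ + d′/(2d))ε + O(ε²): there exist ε₁ ∈ (0, ε₀] and C₁ > 0
such that for all ε ∈ (0, ε₁] the quantities ã₊(ε) and ã₊(ε)+a₋(ε) are positive and
|q(ε) − 1/2 − (1/2)(−bd/Σ − β₀ + d′/(2d))ε| ≤ C₁ε². -/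
set_option maxHeartbeats 2000000 in
theorem stmt_14 (d d' b Sig β₀ C ε₀ : ℝ)
    (hd : 0 < d) (hb : b ≠ 0) (hSig : 0 < Sig) (hC : 0 < C) (hε₀ : 0 < ε₀)
    (ap am : ℝ → ℝ)
    (hap : ∀ ε : ℝ, 0 < ε → ε ≤ ε₀ → |ap ε - d * ε - d' * ε ^ 2 / 2| ≤ C * ε ^ 3)
    (ham : ∀ ε : ℝ, 0 < ε → ε ≤ ε₀ → |am ε - d * ε + d' * ε ^ 2 / 2| ≤ C * ε ^ 3) :
    ∃ ε₁ C₁ : ℝ, 0 < ε₁ ∧ ε₁ ≤ ε₀ ∧ 0 < C₁ ∧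
      ∀ ε : ℝ, 0 < ε → ε ≤ ε₁ →
        0 < ap ε * (1 - 2 * ε * β₀) ∧
        0 < ap ε * (1 - 2 * ε * β₀) + am ε ∧
        |Real.exp (-(b * am ε) / Sig) *
              Real.sinh (ap ε * (1 - 2 * ε * β₀) * |b| / Sig) /
              Real.sinh ((ap ε * (1 - 2 * ε * β₀) + am ε) * |b| / Sig)
            - 1 / 2 - 1 / 2 * (-(b * d) / Sig - β₀ + d' / (2 * d)) * ε|
          ≤ C₁ * ε ^ 2 := by
  have hbpos : 0 < |b| := abs_pos.mpr hb
  set l : Filter ℝ := 𝓝[>] (0:ℝ) with hl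
  have hev_pos : ∀ᶠ ε in l, (0:ℝ) < ε := eventually_mem_nhdsWithin
  have hev_le : ∀ δ : ℝ, 0 < δ → ∀ᶠ ε in l, ε ≤ δ := fun δ hδ =>
    Filter.eventually_of_mem (Ioc_mem_nhdsGT hδ) fun x hx => hx.2
  have hmono : ∀ m n : ℕ, n ≤ m → (fun ε : ℝ => ε ^ m) =O[l] (fun ε => ε ^ n) := by
    intro m n hnm
    apply IsBigO.of_bound 1
    filter_upwards [hev_pos, hev_le 1 one_pos] with ε h1 h2
    rw [Real.norm_eq_abs, Real.norm_eq_abs, abs_of_pos (pow_pos h1 m),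
      abs_of_pos (pow_pos h1 n), one_mul]
    exact pow_le_pow_of_le_one h1.le h2 hnm
  have habs1 : ∀ᶠ x in 𝓝 (0:ℝ), |x| ≤ 1 := by
    filter_upwards [Metric.closedBall_mem_nhds (0:ℝ) one_pos] with x hx
    simpa [Real.dist_eq] using hx
  have hctO : ∀ f : ℝ → ℝ, Continuous f → f =O[l] (fun _ => (1:ℝ)) := fun f hf =>
    ((hf.tendsto 0).mono_left nhdsWithin_le_nhds).isBigO_one ℝ
  have hr : (fun ε => ap ε - d * ε - d' * ε ^ 2 / 2) =O[l] (fun ε => ε ^ 3) := by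
    apply IsBigO.of_bound C
    filter_upwards [hev_pos, hev_le ε₀ hε₀] with ε h1 h2
    rw [Real.norm_eq_abs, Real.norm_eq_abs, abs_of_pos (pow_pos h1 3)]
    exact hap ε h1 h2
  have hsO : (fun ε => am ε - d * ε + d' * ε ^ 2 / 2) =O[l] (fun ε => ε ^ 3) := by
    apply IsBigO.of_bound C
    filter_upwards [hev_pos, hev_le ε₀ hε₀] with ε h1 h2
    rw [Real.norm_eq_abs, Real.norm_eq_abs, abs_of_pos (pow_pos h1 3)]
    exact ham ε h1 h2
  have hap1 : ap =O[l] (fun ε => ε ^ 1) := by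
    have h2 : (fun ε : ℝ => ε ^ 1 * (d + d' * ε / 2)) =O[l] (fun ε => ε ^ 1) :=
      O_mul_one (isBigO_refl _ _) (hctO _ (by fun_prop))
    exact O_congr ((hr.trans (hmono 3 1 (by norm_num))).add h2) (fun x => by ring)
  have ham1 : am =O[l] (fun ε => ε ^ 1) := by
    have h2 : (fun ε : ℝ => ε ^ 1 * (d - d' * ε / 2)) =O[l] (fun ε => ε ^ 1) :=
      O_mul_one (isBigO_refl _ _) (hctO _ (by fun_prop))
    exact O_congr ((hsO.trans (hmono 3 1 (by norm_num))).add h2) (fun x => by ring)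
  set u : ℝ → ℝ := fun ε => ap ε * (1 - 2 * ε * β₀) * |b| / Sig with hu_def
  set v : ℝ → ℝ := fun ε => (ap ε * (1 - 2 * ε * β₀) + am ε) * |b| / Sig with hv_def
  set w : ℝ → ℝ := fun ε => -(b * am ε) / Sig with hw_def
  set c : ℝ := 1 / 2 * (-(b * d) / Sig - β₀ + d' / (2 * d)) with hc_def
  have hu1 : u =O[l] (fun ε => ε ^ 1) := by
    rw [hu_def]
    exact O_congr
      (O_mul_one hap1 (hctO (fun ε => (1 - 2 * ε * β₀) * |b| / Sig) (by fun_prop)))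
      (fun x => by ring)
  have hv1 : v =O[l] (fun ε => ε ^ 1) := by
    rw [hv_def]
    have hsum : (fun ε => ap ε * (1 - 2 * ε * β₀) + am ε) =O[l] (fun ε => ε ^ 1) :=
      (O_mul_one hap1 (hctO (fun ε => 1 - 2 * ε * β₀) (by fun_prop))).add ham1
    exact O_congr (O_mul_one hsum (hctO (fun _ => |b| / Sig) continuous_const))
      (fun x => by ring)
  have hw1 : w =O[l] (fun ε => ε ^ 1) := by
    rw [hw_def]
    exact O_congr (O_mul_one ham1 (hctO (fun _ => -b / Sig) continuous_const))
      (fun x => by ring)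
  have htpow : Tendsto (fun ε : ℝ => ε ^ 1) l (𝓝 0) := by
    simpa using ((continuous_pow 1).tendsto (0:ℝ)).mono_left nhdsWithin_le_nhds
  have htu : Tendsto u l (𝓝 0) := hu1.trans_tendsto htpow
  have htv : Tendsto v l (𝓝 0) := hv1.trans_tendsto htpow
  have htw : Tendsto w l (𝓝 0) := hw1.trans_tendsto htpow
  have hu_small : ∀ᶠ ε in l, |u ε| ≤ 1 := htu.eventually habs1
  have hv_small : ∀ᶠ ε in l, |v ε| ≤ 1 := htv.eventually habs1
  have hw_small : ∀ᶠ ε in l, |w ε| ≤ 1 := htw.eventually habs1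
  have hE1 : (fun ε => Real.sinh (u ε) - u ε) =O[l] (fun ε => ε ^ 3) := by
    have h1 : (fun ε => Real.sinh (u ε) - u ε) =O[l] (fun ε => (u ε) ^ 3) := by
      apply IsBigO.of_bound 1
      filter_upwards [hu_small] with ε hε
      rw [Real.norm_eq_abs, Real.norm_eq_abs, one_mul, abs_pow]
      exact aux_sinh3 _ hε
    exact h1.trans (by simpa using hu1.pow 3)
  have hE2 : (fun ε => Real.sinh (v ε) - v ε) =O[l] (fun ε => ε ^ 3) := by
    have h1 : (fun ε => Real.sinh (v ε) - v ε) =O[l] (fun ε => (v ε) ^ 3) := by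
      apply IsBigO.of_bound 1
      filter_upwards [hv_small] with ε hε
      rw [Real.norm_eq_abs, Real.norm_eq_abs, one_mul, abs_pow]
      exact aux_sinh3 _ hε
    exact h1.trans (by simpa using hv1.pow 3)
  have hE3 : (fun ε => Real.exp (w ε) - (1 + w ε + (w ε)^2/2)) =O[l] (fun ε => ε ^ 3) := by
    have h1 : (fun ε => Real.exp (w ε) - (1 + w ε + (w ε)^2/2)) =O[l] (fun ε => (w ε) ^ 3) := by
      apply IsBigO.of_bound 1
      filter_upwards [hw_small] with ε hε
      rw [Real.norm_eq_abs, Real.norm_eq_abs, one_mul, abs_pow]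
      exact aux_exp3 _ hε
    exact h1.trans (by simpa using hw1.pow 3)
  -- the polynomial heart
  have hG1 : (fun ε => (1 - 2*ε*β₀) * (|b| / Sig) * (1/2 + w ε - c * ε)) =O[l]
      (fun _ => (1:ℝ)) := by
    have t1 : Tendsto (fun ε : ℝ => (1 - 2*ε*β₀) * (|b| / Sig)) l
        (𝓝 ((1 - 2*0*β₀) * (|b| / Sig))) :=
      (((by fun_prop : Continuous fun ε : ℝ => (1 - 2*ε*β₀) * (|b| / Sig))).tendsto 0).mono_left
        nhdsWithin_le_nhds
    have t2 : Tendsto (fun ε => 1/2 + w ε - c * ε) l (𝓝 (1/2 + 0 - c * 0)) :=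
      (tendsto_const_nhds.add htw).sub
        (((continuous_const.mul continuous_id).tendsto (0:ℝ)).mono_left nhdsWithin_le_nhds)
    exact (t1.mul t2).isBigO_one ℝ
  have hG2 : (fun ε : ℝ => -(b/Sig) * ((d*ε + d'*ε^2/2) * (1 - 2*ε*β₀) * (|b|/Sig))
      - (1/2 + c*ε) * (|b|/Sig)) =O[l] (fun _ => (1:ℝ)) := hctO _ (by fun_prop)
  have hkey : ∀ ε : ℝ, u ε + w ε * u ε - (1/2 + c*ε) * v ε =
      (|b|/Sig) * ((b/Sig)*d^2*β₀ - d*β₀^2) * ε^3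
        + (|b|/Sig) * ((b/Sig)*d'^2/4 + c*d'*β₀) * ε^4
        - (|b|/Sig) * ((b/Sig)*d'^2*β₀/2) * ε^5
        + (ap ε - d*ε - d'*ε^2/2) * ((1 - 2*ε*β₀) * (|b| / Sig) * (1/2 + w ε - c * ε))
        + (am ε - d*ε + d'*ε^2/2) *
            (-(b/Sig) * ((d*ε + d'*ε^2/2) * (1 - 2*ε*β₀) * (|b|/Sig))
              - (1/2 + c*ε) * (|b|/Sig)) := by
    intro ε
    simp only [hu_def, hv_def, hw_def, hc_def]
    field_simp
    ring
  have hMrhs : (fun ε : ℝ => (|b|/Sig) * ((b/Sig)*d^2*β₀ - d*β₀^2) * ε^3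
        + (|b|/Sig) * ((b/Sig)*d'^2/4 + c*d'*β₀) * ε^4
        - (|b|/Sig) * ((b/Sig)*d'^2*β₀/2) * ε^5
        + (ap ε - d*ε - d'*ε^2/2) * ((1 - 2*ε*β₀) * (|b| / Sig) * (1/2 + w ε - c * ε))
        + (am ε - d*ε + d'*ε^2/2) *
            (-(b/Sig) * ((d*ε + d'*ε^2/2) * (1 - 2*ε*β₀) * (|b|/Sig))
              - (1/2 + c*ε) * (|b|/Sig))) =O[l] (fun ε => ε ^ 3) := by
    have m3 : (fun ε : ℝ => (|b|/Sig) * ((b/Sig)*d^2*β₀ - d*β₀^2) * ε^3) =O[l]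
        (fun ε => ε^3) :=
      O_congr ((isBigO_refl (fun ε : ℝ => ε^3) l).const_mul_left
        ((|b|/Sig) * ((b/Sig)*d^2*β₀ - d*β₀^2))) (fun x => by ring)
    have m4 : (fun ε : ℝ => (|b|/Sig) * ((b/Sig)*d'^2/4 + c*d'*β₀) * ε^4) =O[l]
        (fun ε => ε^3) :=
      O_congr ((hmono 4 3 (by norm_num)).const_mul_left
        ((|b|/Sig) * ((b/Sig)*d'^2/4 + c*d'*β₀))) (fun x => by ring)
    have m5 : (fun ε : ℝ => (|b|/Sig) * ((b/Sig)*d'^2*β₀/2) * ε^5) =O[l]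
        (fun ε => ε^3) :=
      O_congr ((hmono 5 3 (by norm_num)).const_mul_left
        ((|b|/Sig) * ((b/Sig)*d'^2*β₀/2))) (fun x => by ring)
    have rpart := O_mul_one hr hG1
    have spart := O_mul_one hsO hG2
    exact (((m3.add m4).sub m5).add rpart).add spart
  have hM : (fun ε => u ε + w ε * u ε - (1/2 + c*ε) * v ε) =O[l] (fun ε => ε ^ 3) :=
    O_congr hMrhs (fun x => (hkey x).symm)
  -- numerator
  have hNdecomp : ∀ ε : ℝ,
      Real.exp (w ε) * Real.sinh (u ε) - (1/2 + c*ε) * Real.sinh (v ε) =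
      (Real.exp (w ε) - (1 + w ε + (w ε)^2/2)) * Real.sinh (u ε)
      + (1 + w ε + (w ε)^2/2) * (Real.sinh (u ε) - u ε)
      + (w ε)^2/2 * u ε
      + (u ε + w ε * u ε - (1/2 + c*ε) * v ε)
      - (1/2 + c*ε) * (Real.sinh (v ε) - v ε) := fun ε => by ring
  have hsinhuO : (fun ε => Real.sinh (u ε)) =O[l] (fun _ => (1:ℝ)) :=
    ((Real.continuous_sinh.tendsto 0).comp htu).isBigO_one ℝ
  have ht1 : (fun ε => (Real.exp (w ε) - (1 + w ε + (w ε)^2/2)) * Real.sinh (u ε)) =O[l]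
      (fun ε => ε^3) := O_mul_one hE3 hsinhuO
  have hwfacO : (fun ε => 1 + w ε + (w ε)^2/2) =O[l] (fun _ => (1:ℝ)) := by
    have t : Tendsto (fun ε => 1 + w ε + (w ε)^2/2) l (𝓝 (1 + 0 + 0^2/2)) :=
      (tendsto_const_nhds.add htw).add ((htw.pow 2).div_const 2)
    exact t.isBigO_one ℝ
  have ht2 := O_one_mul hwfacO hE1
  have hw2 : (fun ε => (w ε)^2) =O[l] (fun ε => ε^2) := by simpa using hw1.pow 2
  have ht3 : (fun ε => (w ε)^2/2 * u ε) =O[l] (fun ε => ε^3) := by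
    have h23 : (fun ε => (w ε)^2 * u ε) =O[l] (fun ε => ε^3) := by
      simpa using O_mul_pow hw2 hu1
    exact O_congr (h23.const_mul_left (1/2)) (fun x => by ring)
  have ht5aux : (fun ε : ℝ => 1/2 + c*ε) =O[l] (fun _ => (1:ℝ)) := hctO _ (by fun_prop)
  have ht5 := O_one_mul ht5aux hE2
  have hN : (fun ε => Real.exp (w ε) * Real.sinh (u ε) - (1/2 + c*ε) * Real.sinh (v ε))
      =O[l] (fun ε => ε^3) :=
    O_congr ((((ht1.add ht2).add ht3).add hM).sub ht5) (fun x => (hNdecomp x).symm)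
  obtain ⟨CN, hCN⟩ := isBigO_iff.mp hN
  -- lower bound on v, positivity bounds
  have hv2 : (fun ε => v ε - 2*d*(|b|/Sig)*ε) =O[l] (fun ε => ε^2) := by
    have hv2key : ∀ ε : ℝ, v ε - 2*d*(|b|/Sig)*ε =
        (ap ε - d*ε - d'*ε^2/2) * ((1 - 2*ε*β₀) * (|b|/Sig))
        + (am ε - d*ε + d'*ε^2/2) * (|b|/Sig)
        + (-(2*d*β₀)*ε^2 + (-(d'*β₀))*ε^3) * (|b|/Sig) := by
      intro ε; simp only [hv_def]; field_simp; ring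
    have p1 := (O_mul_one hr
      (hctO (fun ε => (1 - 2*ε*β₀) * (|b|/Sig)) (by fun_prop))).trans (hmono 3 2 (by norm_num))
    have p2 := (O_mul_one hsO
      (hctO (fun _ => (|b|/Sig)) continuous_const)).trans (hmono 3 2 (by norm_num))
    have p3 : (fun ε : ℝ => (-(2*d*β₀)*ε^2 + (-(d'*β₀))*ε^3) * (|b|/Sig)) =O[l]
        (fun ε => ε^2) := by
      have q1 : (fun ε : ℝ => -(2*d*β₀)*ε^2) =O[l] (fun ε => ε^2) :=
        (isBigO_refl _ _).const_mul_left _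
      have q2 := (hmono 3 2 (by norm_num)).const_mul_left (-(d'*β₀))
      exact O_mul_one (q1.add q2) (hctO _ continuous_const)
    exact O_congr ((p1.add p2).add p3) (fun x => (hv2key x).symm)
  obtain ⟨C2, hC2⟩ := isBigO_iff.mp hv2
  have hvlow : ∀ᶠ ε in l, d*(|b|/Sig)*ε ≤ v ε := by
    filter_upwards [hC2, hev_pos, hev_le (d*(|b|/Sig)/(|C2|+1)) (by positivity)]
      with ε h1 h2 h3
    rw [Real.norm_eq_abs, Real.norm_eq_abs, abs_of_pos (pow_pos h2 2)] at h1
    have habs : |v ε - 2*d*(|b|/Sig)*ε| ≤ (|C2|+1) * ε^2 :=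
      h1.trans (by nlinarith [pow_pos h2 2, le_abs_self C2])
    have h4 : (|C2|+1)*ε^2 ≤ d*(|b|/Sig)*ε := by
      have h7 : (|C2|+1)*ε ≤ d*(|b|/Sig) := by
        calc (|C2|+1)*ε ≤ (|C2|+1) * (d*(|b|/Sig)/(|C2|+1)) := by
              exact mul_le_mul_of_nonneg_left h3 (by positivity)
          _ = d*(|b|/Sig) := by field_simp
      nlinarith
    have h5 := (abs_le.mp habs).1
    nlinarith
  have ha2 : (fun ε => ap ε * (1 - 2*ε*β₀) - d*ε) =O[l] (fun ε => ε^2) := by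
    have hakey : ∀ ε : ℝ, ap ε * (1 - 2*ε*β₀) - d*ε =
        (ap ε - d*ε - d'*ε^2/2) * (1 - 2*ε*β₀)
        + ((d'/2 - 2*d*β₀)*ε^2 + (-(d'*β₀))*ε^3) := fun ε => by ring
    have p1 := (O_mul_one hr (hctO (fun ε => 1 - 2*ε*β₀) (by fun_prop))).trans
      (hmono 3 2 (by norm_num))
    have p2 : (fun ε : ℝ => (d'/2 - 2*d*β₀)*ε^2 + (-(d'*β₀))*ε^3) =O[l] (fun ε => ε^2) :=
      ((isBigO_refl (fun ε : ℝ => ε^2) l).const_mul_left _).add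
        ((hmono 3 2 (by norm_num)).const_mul_left _)
    exact O_congr (p1.add p2) (fun x => (hakey x).symm)
  obtain ⟨C3, hC3⟩ := isBigO_iff.mp ha2
  have hapos : ∀ᶠ ε in l, d*ε/2 ≤ ap ε * (1 - 2*ε*β₀) := by
    filter_upwards [hC3, hev_pos, hev_le (d/(2*(|C3|+1))) (by positivity)] with ε h1 h2 h3
    rw [Real.norm_eq_abs, Real.norm_eq_abs, abs_of_pos (pow_pos h2 2)] at h1
    have habs : |ap ε * (1 - 2*ε*β₀) - d*ε| ≤ (|C3|+1)*ε^2 :=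
      h1.trans (by nlinarith [pow_pos h2 2, le_abs_self C3])
    have h4 : (|C3|+1)*ε^2 ≤ d*ε/2 := by
      have h7 : (|C3|+1)*ε ≤ d/2 := by
        calc (|C3|+1)*ε ≤ (|C3|+1) * (d/(2*(|C3|+1))) := by
              exact mul_le_mul_of_nonneg_left h3 (by positivity)
          _ = d/2 := by field_simp
      nlinarith
    have h5 := (abs_le.mp habs).1
    linarith
  have hC₁pos : 0 < |CN| / (d*(|b|/Sig)) + 1 := by positivity
  have hKpos : 0 < d * (|b|/Sig) := by positivity
  have hmain : ∀ᶠ ε in l, 0 < ap ε * (1 - 2 * ε * β₀) ∧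
      0 < ap ε * (1 - 2 * ε * β₀) + am ε ∧
      |Real.exp (w ε) * Real.sinh (u ε) / Real.sinh (v ε) - 1 / 2 - c * ε|
        ≤ (|CN| / (d*(|b|/Sig)) + 1) * ε ^ 2 := by
    filter_upwards [hCN, hvlow, hapos, hev_pos] with ε h1 h2 h3 h4
    have hdε : 0 < d * ε / 2 := half_pos (mul_pos hd h4)
    have hfirst : 0 < ap ε * (1 - 2 * ε * β₀) := lt_of_lt_of_le hdε h3
    have hvpos : 0 < v ε := lt_of_lt_of_le (mul_pos hKpos h4) h2
    have hX : ap ε * (1 - 2 * ε * β₀) + am ε = v ε * (Sig/|b|) := by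
      simp only [hv_def]; field_simp
    have hsecond : 0 < ap ε * (1 - 2 * ε * β₀) + am ε := by
      rw [hX]; exact mul_pos hvpos (by positivity)
    refine ⟨hfirst, hsecond, ?_⟩
    have hsinhv : d*(|b|/Sig)*ε ≤ Real.sinh (v ε) :=
      h2.trans (Real.self_le_sinh_iff.mpr hvpos.le)
    have hsinhpos : 0 < Real.sinh (v ε) := lt_of_lt_of_le (mul_pos hKpos h4) hsinhv
    have hqeq : Real.exp (w ε) * Real.sinh (u ε) / Real.sinh (v ε) - 1 / 2 - c * ε =
        (Real.exp (w ε) * Real.sinh (u ε) - (1/2 + c*ε) * Real.sinh (v ε)) /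
          Real.sinh (v ε) := by
      rw [eq_div_iff hsinhpos.ne', sub_mul, sub_mul,
        div_mul_cancel₀ _ hsinhpos.ne']
      ring
    rw [Real.norm_eq_abs, Real.norm_eq_abs, abs_of_pos (pow_pos h4 3)] at h1
    have hNb : |Real.exp (w ε) * Real.sinh (u ε) - (1/2 + c*ε) * Real.sinh (v ε)|
        ≤ |CN| * ε^3 := h1.trans (by nlinarith [pow_pos h4 3, le_abs_self CN])
    rw [hqeq, abs_div, abs_of_pos hsinhpos]
    calc |Real.exp (w ε) * Real.sinh (u ε) - (1/2 + c*ε) * Real.sinh (v ε)| /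
          Real.sinh (v ε)
        ≤ (|CN| * ε^3) / (d*(|b|/Sig)*ε) :=
          div_le_div₀ (by positivity) hNb (mul_pos hKpos h4) hsinhv
      _ = (|CN| / (d*(|b|/Sig))) * ε^2 := by
          field_simp
      _ ≤ (|CN| / (d*(|b|/Sig)) + 1) * ε^2 := by nlinarith [pow_pos h4 2]
  rw [Filter.eventually_iff, hl, mem_nhdsGT_iff_exists_Ioc_subset] at hmain
  obtain ⟨δ, hδ, hsub⟩ := hmain
  refine ⟨min δ ε₀, |CN| / (d*(|b|/Sig)) + 1, lt_min hδ hε₀, min_le_right _ _, hC₁pos, ?_⟩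
  intro ε hε1 hε2
  have hP := hsub ⟨hε1, hε2.trans (min_le_left _ _)⟩
  simp only [mem_setOf_eq] at hP
  simpa only [hu_def, hv_def, hw_def] using hP
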